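/- For every b ∈ (0,1) with b ≠ 1/2, there exists a_b > 0 such that for every a > a_b and every positive integer n, the map f_{a,b} has a periodic point of (least) period n, i.e., a point x with f_{a,b}^n(x) = x and f_{a,b}^k(x) ≠ x for all 1 ≤ k < n. -/

import Mathlib

open Set Real Filter

/-- Core covering refinement lemma, ordered version. -/
lemma covering_core {f : ℝ → ℝ} {γ δ u v : ℝ} (huv : u ≤ v) (hγδ : γ ≤ δ)
    (hf : ContinuousOn f (Icc u v)) (hfu : f u ≤ γ) (hfv : δ ≤ f v) :
    ∃ α' β', u ≤ α' ∧ α' ≤ β' ∧ β' ≤ v ∧ MapsTo f (Icc α' β') (Icc γ δ) ∧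
      f α' = γ ∧ f β' = δ := by
  -- S : points hitting δ
  set S : Set ℝ := Icc u v ∩ f ⁻¹' {δ} with hS
  have hSclosed : IsClosed S := hf.preimage_isClosed_of_isClosed isClosed_Icc isClosed_singleton
  have hSne : S.Nonempty := by
    obtain ⟨y, hy, hfy⟩ := intermediate_value_Icc huv hf ⟨le_trans hfu hγδ, hfv⟩
    exact ⟨y, hy, hfy⟩
  have hSbdd : BddBelow S := ⟨u, fun x hx => hx.1.1⟩
  set β' := sInf S with hβ'
  have hβ'S : β' ∈ S := hSclosed.csInf_mem hSne hSbdd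
  have hβ'mem : β' ∈ Icc u v := hβ'S.1
  have hfβ' : f β' = δ := hβ'S.2
  -- T : points in [u, β'] hitting γ
  set T : Set ℝ := Icc u β' ∩ f ⁻¹' {γ} with hT
  have hfT : ContinuousOn f (Icc u β') := hf.mono (Icc_subset_Icc le_rfl hβ'mem.2)
  have hTclosed : IsClosed T := hfT.preimage_isClosed_of_isClosed isClosed_Icc isClosed_singleton
  have hTne : T.Nonempty := by
    obtain ⟨y, hy, hfy⟩ := intermediate_value_Icc hβ'mem.1 hfT ⟨hfu, hfβ' ▸ hγδ⟩
    exact ⟨y, hy, hfy⟩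
  have hTbdd : BddAbove T := ⟨β', fun x hx => hx.1.2⟩
  set α' := sSup T with hα'
  have hα'T : α' ∈ T := hTclosed.csSup_mem hTne hTbdd
  have hα'mem : α' ∈ Icc u β' := hα'T.1
  have hfα' : f α' = γ := hα'T.2
  refine ⟨α', β', hα'mem.1, hα'mem.2, hβ'mem.2, ?_, hfα', hfβ'⟩
  intro x hx
  have hxuv : x ∈ Icc u v := ⟨le_trans hα'mem.1 hx.1, le_trans hx.2 hβ'mem.2⟩
  constructor
  · -- γ ≤ f x
    by_contra h
    push_neg at h
    have hxβ' : ContinuousOn f (Icc x β') := hf.mono (Icc_subset_Icc hxuv.1 hβ'mem.2)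
    obtain ⟨y, hy, hfy⟩ := intermediate_value_Icc hx.2 hxβ' ⟨h.le, hfβ' ▸ hγδ⟩
    have hyT : y ∈ T := ⟨⟨le_trans hxuv.1 hy.1, hy.2⟩, hfy⟩
    have : y ≤ α' := le_csSup hTbdd hyT
    have hxα' : α' < x := lt_of_le_of_ne hx.1 (fun h' => by rw [← h'] at h; exact absurd hfα' h.ne)
    linarith [hy.1]
  · -- f x ≤ δ
    by_contra h
    push_neg at h
    have hαx : ContinuousOn f (Icc α' x) :=
      hf.mono (Icc_subset_Icc (le_trans hα'mem.1 le_rfl) hxuv.2)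
    obtain ⟨y, hy, hfy⟩ := intermediate_value_Icc hx.1 hαx ⟨hfα' ▸ hγδ, h.le⟩
    have hyS : y ∈ S := ⟨⟨le_trans hα'mem.1 hy.1, le_trans hy.2 hxuv.2⟩, hfy⟩
    have : β' ≤ y := csInf_le hSbdd hyS
    have hxβ' : x < β' := lt_of_le_of_ne hx.2 (fun h' => by rw [h'] at h; exact absurd hfβ' h.ne')
    linarith [hy.2]

/-- General covering refinement: if `f` on `[α,β]` takes a value `≤ γ` and a value `≥ δ`,
there is a subinterval mapping into `[γ,δ]` with endpoints going to the endpoints. -/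
lemma covering {f : ℝ → ℝ} {α β γ δ u v : ℝ} (hαβ : α ≤ β) (hγδ : γ ≤ δ)
    (hf : ContinuousOn f (Icc α β)) (hu : u ∈ Icc α β) (hv : v ∈ Icc α β)
    (hfu : f u ≤ γ) (hfv : δ ≤ f v) :
    ∃ α' β', α ≤ α' ∧ α' ≤ β' ∧ β' ≤ β ∧ MapsTo f (Icc α' β') (Icc γ δ) ∧
      ((f α' = γ ∧ f β' = δ) ∨ (f α' = δ ∧ f β' = γ)) := by
  rcases le_total u v with huv | hvu
  · obtain ⟨α', β', h1, h2, h3, h4, h5, h6⟩ :=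
      covering_core huv hγδ (hf.mono (Icc_subset_Icc hu.1 hv.2)) hfu hfv
    exact ⟨α', β', le_trans hu.1 h1, h2, le_trans h3 hv.2, h4, Or.inl ⟨h5, h6⟩⟩
  · -- reflect values: g = γ + δ - f
    have hg : ContinuousOn (fun x => γ + δ - f x) (Icc v u) :=
      (continuousOn_const.sub (hf.mono (Icc_subset_Icc hv.1 hu.2)))
    obtain ⟨α', β', h1, h2, h3, h4, h5, h6⟩ :=
      covering_core hvu hγδ hg (show γ + δ - f v ≤ γ by linarith) (show δ ≤ γ + δ - f u by linarith)
    refine ⟨α', β', le_trans hv.1 h1, h2, le_trans h3 hu.2, ?_, Or.inr ⟨by linarith, by linarith⟩⟩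
    intro x hx
    have := h4 hx
    simp only [mem_Icc] at this ⊢
    constructor <;> linarith [this.1, this.2]

/-- Periodic point from a cyclic chain of interval coverings. -/
lemma chain_periodic {f : ℝ → ℝ} {A B : ℝ} (lo hi : ℕ → ℝ) {n : ℕ} (hn : 0 < n)
    (hf : ContinuousOn f (Icc A B))
    (hK : ∀ i ≤ n, A ≤ lo i ∧ lo i ≤ hi i ∧ hi i ≤ B)
    (hcov : ∀ i < n, (∃ u ∈ Icc (lo i) (hi i), f u ≤ lo (i+1)) ∧
                     (∃ v ∈ Icc (lo i) (hi i), hi (i+1) ≤ f v))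
    (hlo : lo n = lo 0) (hhi : hi n = hi 0) :
    ∃ x ∈ Icc (lo 0) (hi 0), f^[n] x = x ∧ ∀ i ≤ n, f^[i] x ∈ Icc (lo i) (hi i) := by
  -- downward construction
  have aux : ∀ j ≤ n, ∃ α β, lo (n-j) ≤ α ∧ α ≤ β ∧ β ≤ hi (n-j) ∧
      (∀ i ≤ j, MapsTo f^[i] (Icc α β) (Icc (lo (n-j+i)) (hi (n-j+i)))) ∧
      ((f^[j] α = lo n ∧ f^[j] β = hi n) ∨ (f^[j] α = hi n ∧ f^[j] β = lo n)) := by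
    intro j
    induction j with
    | zero =>
      intro _
      refine ⟨lo n, hi n, by simp, (hK n le_rfl).2.1, by simp, ?_, Or.inl ⟨rfl, rfl⟩⟩
      intro i hi'
      interval_cases i
      simp [MapsTo]
    | succ j ih =>
      intro hj
      obtain ⟨α, β, h1, h2, h3, h4, h5⟩ := ih (le_of_lt (Nat.lt_of_succ_le hj))
      have hidx : n - (j+1) + 1 = n - j := by omega
      have hidx2 : n - (j+1) < n := by omega
      obtain ⟨⟨u, hu, hfu⟩, ⟨v, hv, hfv⟩⟩ := hcov (n - (j+1)) hidx2
      rw [hidx] at hfu hfv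
      have hKj : A ≤ lo (n-(j+1)) ∧ lo (n-(j+1)) ≤ hi (n-(j+1)) ∧ hi (n-(j+1)) ≤ B :=
        hK _ (by omega)
      have hfK : ContinuousOn f (Icc (lo (n-(j+1))) (hi (n-(j+1)))) :=
        hf.mono (Icc_subset_Icc hKj.1 hKj.2.2)
      obtain ⟨α', β', g1, g2, g3, g4, g5⟩ :=
        covering hKj.2.1 h2 hfK hu hv (le_trans hfu h1) (le_trans h3 hfv)
      refine ⟨α', β', g1, g2, g3, ?_, ?_⟩
      · intro i hi'
        match i with
        | 0 =>
          intro x hx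
          simpa using ⟨le_trans g1 hx.1, le_trans hx.2 g3⟩
        | (i+1) =>
          have hii : i ≤ j := by omega
          have : n - (j+1) + (i+1) = n - j + i := by omega
          rw [this]
          intro x hx
          rw [Function.iterate_succ_apply]
          exact h4 i hii (g4 hx)
      · have e1 : f^[j+1] α' = f^[j] (f α') := Function.iterate_succ_apply f j α'
        have e2 : f^[j+1] β' = f^[j] (f β') := Function.iterate_succ_apply f j β'
        rcases g5 with ⟨ga, gb⟩ | ⟨ga, gb⟩ <;> rw [e1, e2, ga, gb] <;> tauto
  obtain ⟨α, β, h1, h2, h3, h4, h5⟩ := aux n le_rfl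
  rw [Nat.sub_self] at h1 h3
  have h4' : ∀ i ≤ n, MapsTo f^[i] (Icc α β) (Icc (lo i) (hi i)) := by
    intro i hi'
    have := h4 i hi'
    rwa [Nat.sub_self, Nat.zero_add] at this
  -- continuity of iterates on [α, β]
  have hcont : ∀ i ≤ n, ContinuousOn f^[i] (Icc α β) := by
    intro i
    induction i with
    | zero => intro _; simpa using continuousOn_id
    | succ i ih =>
      intro hi'
      have hci := ih (by omega)
      have hmt := h4' i (by omega)
      have hKi := hK i (by omega)
      have : ContinuousOn (f ∘ f^[i]) (Icc α β) :=
        hf.comp hci (hmt.mono_right (Icc_subset_Icc hKi.1 hKi.2.2))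
      rw [Function.iterate_succ']
      exact this
  have hcn : ContinuousOn f^[n] (Icc α β) := hcont n le_rfl
  have hg : ContinuousOn (fun x => f^[n] x - x) (Icc α β) := hcn.sub continuousOn_id
  have key : ∃ x ∈ Icc α β, f^[n] x = x := by
    rcases h5 with ⟨ha, hb⟩ | ⟨ha, hb⟩
    · have s1 : f^[n] α - α ≤ 0 := by rw [ha, hlo]; linarith
      have s2 : 0 ≤ f^[n] β - β := by rw [hb, hhi]; linarith
      obtain ⟨x, hx, hfx⟩ := intermediate_value_Icc h2 hg ⟨s1, s2⟩
      exact ⟨x, hx, by linarith [sub_eq_zero.mp hfx]⟩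
    · have s1 : 0 ≤ f^[n] α - α := by rw [ha, hhi]; linarith
      have s2 : f^[n] β - β ≤ 0 := by rw [hb, hlo]; linarith
      obtain ⟨x, hx, hfx⟩ := intermediate_value_Icc' h2 hg ⟨s2, s1⟩
      exact ⟨x, hx, by linarith [sub_eq_zero.mp hfx]⟩
  obtain ⟨x, hx, hfx⟩ := key
  exact ⟨x, ⟨le_trans h1 hx.1, le_trans hx.2 h3⟩, hfx, fun i hi' => h4' i hi' hx⟩


/-- The map `f_{a,b}(x) = x / (x + (1-x) * exp (a (x - b)))`. -/
noncomputable def chaosMap (a b : ℝ) : ℝ → ℝ :=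
  fun x => x / (x + (1 - x) * Real.exp (a * (x - b)))

open Set Real Filter

lemma chaosMap_conj (a b y : ℝ) (hy0 : 0 < y) (hy1 : y < 1) :
    chaosMap a b (1 - y) = 1 - chaosMap a (1 - b) y := by
  have hE : Real.exp (a * (1 - y - b)) = (Real.exp (a * (y - (1 - b))))⁻¹ := by
    rw [← Real.exp_neg]; congr 1; ring
  have hEpos := Real.exp_pos (a * (y - (1 - b)))
  have d2 : 0 < y + (1 - y) * Real.exp (a * (y - (1 - b))) := by
    have : 0 < (1 - y) * Real.exp (a * (y - (1 - b))) := mul_pos (by linarith) hEpos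
    linarith
  have d1 : 0 < (1 - y) + (1 - (1 - y)) * Real.exp (a * (1 - y - b)) := by
    have : 0 ≤ (1 - (1 - y)) * Real.exp (a * (1 - y - b)) :=
      mul_nonneg (by linarith) (Real.exp_pos _).le
    linarith
  unfold chaosMap
  rw [hE] at d1 ⊢
  set E := Real.exp (a * (y - (1 - b))) with hEdef
  have d2' : y - y*E + E ≠ 0 := by
    have : y - y*E + E = y + (1 - y) * E := by ring
    rw [this]; exact d2.ne'
  have d1' : 1 - y + (1 - (1 - y)) * E⁻¹ ≠ 0 := d1.ne'
  field_simp [d2', hEpos.ne']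
  have dne : (1 - y) * E + y ≠ 0 := by
    have h : (1 - y) * E + y = y + (1 - y) * E := by ring
    rw [h]; exact d2.ne'
  rw [div_eq_iff (show (1 - y) * E + (1 - (1 - y)) ≠ 0 by rw [sub_sub_cancel]; exact dne)]
  ring


lemma chaosMap_fixed (a b : ℝ) : chaosMap a b b = b := by
  have : b + (1 - b) * Real.exp (a * (b - b)) = 1 := by
    rw [sub_self, mul_zero, Real.exp_zero]; ring
  simp [chaosMap, this]

set_option maxHeartbeats 2000000 in
/-- Main construction for `0 < b < 1/2`. -/
lemma main_half (b : ℝ) (hb0 : 0 < b) (hb1 : b < 1/2) :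
    ∃ a_b : ℝ, 0 < a_b ∧ ∀ a : ℝ, a_b < a → ∀ n : ℕ, 0 < n →
      ∃ x ∈ Set.Icc (0 : ℝ) 1, (∀ i, (chaosMap a b)^[i] x ∈ Set.Ioo (0:ℝ) 1) ∧
        (chaosMap a b)^[n] x = x ∧
        ∀ k : ℕ, 1 ≤ k → k < n → (chaosMap a b)^[k] x ≠ x := by
  -- eventual smallness conditions
  have hs : (0:ℝ) < 1/2 - b := by linarith
  have tend : ∀ c : ℝ, 0 < c → Tendsto (fun a : ℝ => Real.exp (-(a * c))) atTop (nhds 0) := by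
    intro c hc
    apply Real.tendsto_exp_atBot.comp
    have : Tendsto (fun a : ℝ => a * c) atTop atTop := Tendsto.atTop_mul_const hc tendsto_id
    exact tendsto_neg_atBot_iff.mpr this
  have ev1 : ∀ᶠ a in atTop, Real.exp (-(a * ((1-2*b)/4))) ≤ b/4 :=
    ((tend _ (by linarith)).eventually_lt_const (by linarith)).mono fun a h => h.le
  have ev2 : ∀ᶠ a in atTop, Real.exp (-(a * (3*b/4))) ≤ b/4 * (1/2 - b) :=
    ((tend _ (by linarith)).eventually_lt_const (by nlinarith)).mono fun a h => h.le
  have ev3 : ∀ᶠ a in atTop, Real.exp (-(a * (b/2))) ≤ b/2 * (1/2 - b) :=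
    ((tend _ (by linarith)).eventually_lt_const (by nlinarith)).mono fun a h => h.le
  have ev0 : ∀ᶠ a in atTop, Real.exp (-(a * ((2*b+1)/4))) ≤ b/8 :=
    ((tend _ (by linarith)).eventually_lt_const (by linarith)).mono fun a h => h.le
  have ev4 : ∀ᶠ a in atTop, b + 1/2 ≤ (1/2 - b) * Real.exp (a * ((1-2*b)/4)) := by
    have h1 : Tendsto (fun a : ℝ => a * ((1-2*b)/4)) atTop atTop :=
      Tendsto.atTop_mul_const (by linarith) tendsto_id
    have h2 : Tendsto (fun a : ℝ => Real.exp (a * ((1-2*b)/4))) atTop atTop :=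
      Real.tendsto_exp_atTop.comp h1
    have h3 : Tendsto (fun a : ℝ => (1/2 - b) * Real.exp (a * ((1-2*b)/4))) atTop atTop :=
      Tendsto.const_mul_atTop hs h2
    exact h3.eventually_ge_atTop _
  obtain ⟨a₀, ha₀⟩ := eventually_atTop.mp ((((ev0.and ev1).and ev2).and ev3).and ev4)
  refine ⟨max a₀ 1, lt_of_lt_of_le one_pos (le_max_right _ _), ?_⟩
  intro a ha n hn
  obtain ⟨⟨⟨⟨e0, e1⟩, e2⟩, e3⟩, e4⟩ := ha₀ a (le_of_lt (lt_of_le_of_lt (le_max_left _ _) ha))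
  have ha1 : (1:ℝ) < a := lt_of_le_of_lt (le_max_right _ _) ha
  have ha0 : (0:ℝ) < a := by linarith
  set f := chaosMap a b with hf
  set p := Real.exp (-(a * ((2*b+1)/4))) with hpdef
  have hp0 : 0 < p := Real.exp_pos _
  have hpb : p ≤ b/8 := e0
  have hv1 : b + 1/2 < 1 := by linarith
  -- denominator positivity
  have hD : ∀ x : ℝ, 0 < x → x < 1 → 0 < x + (1 - x) * Real.exp (a * (x - b)) := by
    intro x hx hx1
    have : 0 < (1 - x) * Real.exp (a * (x - b)) := mul_pos (by linarith) (Real.exp_pos _)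
    linarith
  have hfeq : ∀ x, f x = x / (x + (1 - x) * Real.exp (a * (x - b))) := fun x => rfl
  -- C1 : f p ≤ b/2
  have hC1 : f p ≤ b/2 := by
    have hp1 : p < 1 := by linarith
    rw [hfeq, div_le_iff₀ (hD p hp0 hp1)]
    have hexp : Real.exp (-(a*b)) ≤ Real.exp (a * (p - b)) := by
      apply Real.exp_le_exp.mpr; nlinarith
    have h1 : b/4 * Real.exp (-(a*b)) ≤ b/2 * ((1-p) * Real.exp (a * (p - b))) := by
      have h1p : (1:ℝ)/2 ≤ 1 - p := by linarith
      have s1 : b/4 * Real.exp (-(a*b)) ≤ b/4 * Real.exp (a*(p-b)) :=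
        mul_le_mul_of_nonneg_left hexp (by linarith)
      have s2 : b/4 * Real.exp (a*(p-b)) ≤ b/2 * (1-p) * Real.exp (a*(p-b)) :=
        mul_le_mul_of_nonneg_right (by nlinarith) (Real.exp_pos _).le
      calc b/4 * Real.exp (-(a*b)) ≤ b/4 * Real.exp (a*(p-b)) := s1
        _ ≤ b/2 * (1-p) * Real.exp (a*(p-b)) := s2
        _ = b/2 * ((1-p) * Real.exp (a*(p-b))) := by ring
    have h2 : p ≤ b/4 * Real.exp (-(a*b)) := by
      rw [hpdef, ← sub_nonneg]
      have : b/4 * Real.exp (-(a*b)) - Real.exp (-(a * ((2*b+1)/4))) =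
          Real.exp (-(a*b)) * (b/4 - Real.exp (-(a * ((1-2*b)/4)))) := by
        rw [mul_sub, ← Real.exp_add]
        ring_nf
      rw [this]
      have := Real.exp_pos (-(a*b))
      nlinarith
    nlinarith [h1, h2, mul_pos (show (0:ℝ) < b/2 by linarith) hp0]
  -- C2 : b + 1/2 ≤ f (b/4)
  have hC2 : b + 1/2 ≤ f (b/4) := by
    have h04 : (0:ℝ) < b/4 := by linarith
    have h41 : b/4 < 1 := by linarith
    rw [hfeq, le_div_iff₀ (hD _ h04 h41)]
    have harg : a * (b/4 - b) = -(a * (3*b/4)) := by ring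
    rw [harg]
    have st1 : (b+1/2)*(1-b/4) ≤ 1 := by nlinarith
    have st2 : ((b+1/2)*(1-b/4))*Real.exp (-(a * (3*b/4))) ≤ 1 * Real.exp (-(a * (3*b/4))) :=
      mul_le_mul_of_nonneg_right st1 (Real.exp_pos _).le
    linarith [st2, e2]
  -- C3 : b + 1/2 ≤ f (b/2)
  have hC3 : b + 1/2 ≤ f (b/2) := by
    have h02 : (0:ℝ) < b/2 := by linarith
    have h21 : b/2 < 1 := by linarith
    rw [hfeq, le_div_iff₀ (hD _ h02 h21)]
    have harg : a * (b/2 - b) = -(a * (b/2)) := by ring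
    rw [harg]
    have st1 : (b+1/2)*(1-b/2) ≤ 1 := by nlinarith
    have st2 : ((b+1/2)*(1-b/2))*Real.exp (-(a * (b/2))) ≤ 1 * Real.exp (-(a * (b/2))) :=
      mul_le_mul_of_nonneg_right st1 (Real.exp_pos _).le
    linarith [st2, e3]
  -- C4 : f (b+1/2) ≤ p
  have hC4 : f (b + 1/2) ≤ p := by
    have h0v : (0:ℝ) < b + 1/2 := by linarith
    rw [hfeq, div_le_iff₀ (hD _ h0v hv1)]
    have harg : a * (b + 1/2 - b) = a/2 := by ring
    rw [harg]
    have key : p * Real.exp (a/2) = Real.exp (a * ((1-2*b)/4)) := by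
      rw [hpdef, ← Real.exp_add]
      congr 1
      ring
    have key2 : b * (p * Real.exp (a/2)) = b * Real.exp (a * ((1-2*b)/4)) := by rw [key]
    linarith [key, key2, e4, mul_pos hp0 hb0, hp0]
  -- continuity
  have hcont : ContinuousOn f (Icc p (b + 1/2)) := by
    apply ContinuousOn.div continuousOn_id
    · exact (Continuous.continuousOn (by continuity))
    · intro x hx
      exact ne_of_gt (hD x (lt_of_lt_of_le hp0 hx.1) (lt_of_le_of_lt hx.2 hv1))
  -- fixed point case n = 1
  rcases eq_or_lt_of_le (Nat.succ_le_of_lt hn) with hn1 | hn2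
  · refine ⟨b, ⟨hb0.le, by linarith⟩, ?_, ?_, ?_⟩
    · intro i
      rw [Function.iterate_fixed (chaosMap_fixed a b) i]
      exact ⟨hb0, by linarith⟩
    · rw [Function.iterate_fixed (chaosMap_fixed a b) n]
    · intro k hk1 hkn
      omega
  -- main case n ≥ 2
  have hn2' : 2 ≤ n := hn2
  set lo : ℕ → ℝ := fun i => if i % n = 0 then p else b/2 with hlo_def
  set hi : ℕ → ℝ := fun i => if i % n = 0 then b/4 else b + 1/2 with hhi_def
  have hpq : p ≤ b/4 := by linarith
  have hK : ∀ i ≤ n, p ≤ lo i ∧ lo i ≤ hi i ∧ hi i ≤ b + 1/2 := by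
    intro i _
    by_cases h : i % n = 0
    · have l1 : lo i = p := by simp [hlo_def, h]
      have l2 : hi i = b/4 := by simp [hhi_def, h]
      rw [l1, l2]; exact ⟨le_rfl, by linarith, by linarith⟩
    · have l1 : lo i = b/2 := by simp [hlo_def, h]
      have l2 : hi i = b + 1/2 := by simp [hhi_def, h]
      rw [l1, l2]; exact ⟨by linarith, by linarith, le_rfl⟩
  have hcov : ∀ i < n, (∃ u ∈ Icc (lo i) (hi i), f u ≤ lo (i+1)) ∧
      (∃ v ∈ Icc (lo i) (hi i), hi (i+1) ≤ f v) := by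
    intro i hi'
    have him : i % n = i := Nat.mod_eq_of_lt hi'
    by_cases h0 : i = 0
    · -- source I = [p, b/4], target J = [b/2, b+1/2]
      have hsrc0 : i % n = 0 := by rw [him, h0]
      have htgt : (i + 1) % n ≠ 0 := by
        subst h0
        rw [Nat.mod_eq_of_lt (by omega)]
        omega
      have l1 : lo i = p := by simp [hlo_def, hsrc0]
      have l2 : hi i = b/4 := by simp [hhi_def, hsrc0]
      have l3 : lo (i+1) = b/2 := by simp [hlo_def, htgt]
      have l4 : hi (i+1) = b + 1/2 := by simp [hhi_def, htgt]
      rw [l1, l2, l3, l4]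
      exact ⟨⟨p, ⟨le_rfl, hpq⟩, hC1⟩, ⟨b/4, ⟨hpq, le_rfl⟩, hC2⟩⟩
    · -- source J = [b/2, b+1/2]
      have hsrc : i % n ≠ 0 := by rw [him]; exact h0
      have l1 : lo i = b/2 := by simp [hlo_def, hsrc]
      have l2 : hi i = b + 1/2 := by simp [hhi_def, hsrc]
      rw [l1, l2]
      have humem : (b + 1/2 : ℝ) ∈ Icc (b/2) (b + 1/2) := ⟨by linarith, le_rfl⟩
      have hvmem : (b/2 : ℝ) ∈ Icc (b/2) (b + 1/2) := ⟨le_rfl, by linarith⟩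
      by_cases h1 : (i + 1) % n = 0
      · -- target I
        have l3 : lo (i+1) = p := by simp [hlo_def, h1]
        have l4 : hi (i+1) = b/4 := by simp [hhi_def, h1]
        rw [l3, l4]
        exact ⟨⟨b + 1/2, humem, hC4⟩, ⟨b/2, hvmem, by linarith [hC3]⟩⟩
      · -- target J
        have l3 : lo (i+1) = b/2 := by simp [hlo_def, h1]
        have l4 : hi (i+1) = b + 1/2 := by simp [hhi_def, h1]
        rw [l3, l4]
        exact ⟨⟨b + 1/2, humem, by linarith [hC4]⟩, ⟨b/2, hvmem, hC3⟩⟩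
  have hlon : lo n = lo 0 := by simp [hlo_def, Nat.mod_self]
  have hhin : hi n = hi 0 := by simp [hhi_def, Nat.mod_self]
  obtain ⟨x, hx, hxper, hxit⟩ := chain_periodic lo hi hn hcont hK hcov hlon hhin
  have hlo0 : lo 0 = p := by simp [hlo_def]
  have hhi0 : hi 0 = b/4 := by simp [hhi_def]
  rw [hlo0, hhi0] at hx
  -- all iterates up to n lie in [p, b+1/2]
  have hband : ∀ i ≤ n, f^[i] x ∈ Icc p (b + 1/2) := by
    intro i hile
    have h1 := hxit i hile
    have h2 := hK i hile
    exact ⟨le_trans h2.1 h1.1, le_trans h1.2 h2.2.2⟩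
  -- all iterates (unbounded) reduce to iterates ≤ n
  have hall : ∀ i, ∃ j, j ≤ n ∧ f^[i] x = f^[j] x := by
    intro i
    induction i with
    | zero => exact ⟨0, Nat.zero_le n, rfl⟩
    | succ i ih =>
      obtain ⟨j, hj, hij⟩ := ih
      by_cases hjn : j = n
      · refine ⟨1, hn, ?_⟩
        rw [Function.iterate_succ_apply', hij, hjn, hxper, Function.iterate_one]
      · refine ⟨j + 1, by omega, ?_⟩
        rw [Function.iterate_succ_apply', hij]
        exact (Function.iterate_succ_apply' f j x).symm
  refine ⟨x, ⟨by linarith [hx.1], by linarith [hx.2]⟩, ?_, hxper, ?_⟩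
  · intro i
    obtain ⟨j, hj, hij⟩ := hall i
    have := hband j hj
    rw [hij]
    exact ⟨lt_of_lt_of_le hp0 this.1, lt_of_le_of_lt this.2 hv1⟩
  · intro k hk1 hkn
    have hkm : k % n = k := Nat.mod_eq_of_lt hkn
    have h1 := hxit k (le_of_lt hkn)
    have hkne : k % n ≠ 0 := by omega
    have l1 : lo k = b/2 := by simp [hlo_def, hkne]
    rw [l1] at h1
    intro heq
    rw [heq] at h1
    have := h1.1
    linarith [hx.2]



/-- For every `b ∈ (0,1)` with `b ≠ 1/2` there is `a_b > 0` such that for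
every `a > a_b` the map `f_{a,b}` has periodic points of all least periods. -/
theorem stmt_13 (b : ℝ) (hb : b ∈ Set.Ioo (0 : ℝ) 1) (hb2 : b ≠ 1 / 2) :
    ∃ a_b : ℝ, 0 < a_b ∧ ∀ a : ℝ, a_b < a → ∀ n : ℕ, 0 < n →
      ∃ x ∈ Set.Icc (0 : ℝ) 1, (chaosMap a b)^[n] x = x ∧
        ∀ k : ℕ, 1 ≤ k → k < n → (chaosMap a b)^[k] x ≠ x := by
  obtain ⟨hb0, hb1⟩ := hb
  rcases lt_or_gt_of_ne hb2 with hlt | hgt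
  · obtain ⟨a_b, hab, H⟩ := main_half b hb0 hlt
    refine ⟨a_b, hab, fun a ha n hn => ?_⟩
    obtain ⟨x, hx, _, hper, hne⟩ := H a ha n hn
    exact ⟨x, hx, hper, hne⟩
  · have h1b0 : 0 < 1 - b := by linarith
    have h1b : 1 - b < 1/2 := by linarith
    obtain ⟨a_b, hab, H⟩ := main_half (1 - b) h1b0 h1b
    refine ⟨a_b, hab, fun a ha n hn => ?_⟩
    obtain ⟨x', hx', hioo, hper, hne⟩ := H a ha n hn
    have key : ∀ k : ℕ, (chaosMap a b)^[k] (1 - x') = 1 - (chaosMap a (1 - b))^[k] x' := by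
      intro k
      induction k with
      | zero => simp
      | succ k ih =>
        rw [Function.iterate_succ_apply', Function.iterate_succ_apply', ih]
        have hk := hioo k
        exact chaosMap_conj a b ((chaosMap a (1 - b))^[k] x') hk.1 hk.2
    refine ⟨1 - x', ⟨by linarith [hx'.2], by linarith [hx'.1]⟩, ?_, ?_⟩
    · rw [key n, hper]
    · intro k hk1 hkn heq
      rw [key k] at heq
      exact hne k hk1 hkn (by linarith)
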